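/- Let n ≥ 2 and D ⊆ ℤ/nℤ with |D| = k ≥ 1. Let G be a subgroup of the symmetric group on ℤ/nℤ such that: (i) G is doubly transitive (for any ordered pairs (a,b), (a′,b′) of distinct elements there is g ∈ G with g(a) = a′ and g(b) = b′); (ii) the translation x ↦ x + 1 lies in G; and (iii) for every g ∈ G there exists t ∈ ℤ/nℤ with g(D) = D + t. Then (n−1) divides k(k−1), and every nonzero u ∈ ℤ/nℤ has exactly u₀ = k(k−1)/(n−1) representations as an ordered difference u = d₁ − d₂ with d₁, d₂ ∈ D. -/

import Mathlib

theorem Equiv.Perm.inv_apply_self {α : Type*} (f : Equiv.Perm α) (x : α) : f⁻¹ (f x) = x :=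
  f.symm_apply_apply x

theorem Equiv.Perm.apply_inv_self {α : Type*} (f : Equiv.Perm α) (x : α) : f (f⁻¹ x) = x :=
  f.apply_symm_apply x

/-- **Proposition 5.5 (DS3), first statement.**  Let `D ⊆ ℤ/nℤ` with `|D| = k ≥ 1`,
`n ≥ 2`, and let `G` be a doubly transitive subgroup of `Sym(ℤ/nℤ)` containing the
translation `x ↦ x + 1` such that every `g ∈ G` maps `D` to a translate of `D`.  Then
`(n-1) ∣ k(k-1)` and every nonzero `u ∈ ℤ/nℤ` has exactly `k(k-1)/(n-1)` representations
as an ordered difference `d₁ - d₂` with `d₁, d₂ ∈ D`. -/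
theorem davenport_DS3
    (n : ℕ) (hn : 2 ≤ n) (D : Finset (ZMod n)) (k : ℕ) (hkcard : D.card = k) (hk : 1 ≤ k)
    (G : Subgroup (Equiv.Perm (ZMod n)))
    (hdoubly : ∀ a b a' b' : ZMod n, a ≠ b → a' ≠ b' → ∃ g ∈ G, g a = a' ∧ g b = b')
    (htrans : Equiv.addLeft (1 : ZMod n) ∈ G)
    (hDtranslate : ∀ g ∈ G, ∃ t : ZMod n, D.image g = D.image (fun d => d + t)) :
    (n - 1) ∣ k * (k - 1) ∧
      ∀ u : ZMod n, u ≠ 0 →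
        ((D ×ˢ D).filter (fun p => p.1 - p.2 = u)).card = k * (k - 1) / (n - 1) := by
  classical
  haveI : NeZero n := ⟨by omega⟩
  haveI : Fact (1 < n) := ⟨hn⟩
  have h01 : (0 : ZMod n) ≠ 1 := zero_ne_one
  set N : ZMod n → ℕ := fun v => ((D ×ˢ D).filter (fun p => p.1 - p.2 = v)).card with hNdef
  set GG : Finset (Equiv.Perm (ZMod n)) := Finset.univ.filter (fun g => g ∈ G) with hGGdef
  set c : ℕ :=
    (Finset.univ.filter (fun g : Equiv.Perm (ZMod n) => g ∈ G ∧ g 0 = 0 ∧ g 1 = 1)).card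
    with hcdef
  -- Lemma B: the number of elements of G sending a distinct pair to a distinct pair
  -- is the constant c.
  have hB : ∀ x y a b : ZMod n, x ≠ y → a ≠ b →
      (Finset.univ.filter (fun g : Equiv.Perm (ZMod n) => g ∈ G ∧ g x = a ∧ g y = b)).card
        = c := by
    intro x y a b hxy hab
    obtain ⟨g₁, hg₁G, hg₁0, hg₁1⟩ := hdoubly 0 1 x y h01 hxy
    obtain ⟨g₀, hg₀G, hg₀x, hg₀y⟩ := hdoubly x y a b hxy hab
    rw [hcdef]
    refine Finset.card_bij' (fun g _ => g₁⁻¹ * g₀⁻¹ * g * g₁)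
      (fun h _ => g₀ * g₁ * h * g₁⁻¹) ?_ ?_ ?_ ?_
    · intro g hg
      simp only [Finset.mem_filter, Finset.mem_univ, true_and] at hg ⊢
      obtain ⟨hgG, hgx, hgy⟩ := hg
      refine ⟨mul_mem (mul_mem (mul_mem (inv_mem hg₁G) (inv_mem hg₀G)) hgG) hg₁G, ?_, ?_⟩
      · simp only [Equiv.Perm.mul_apply, hg₁0, hgx, ← hg₀x, Equiv.Perm.inv_apply_self]
        rw [← hg₁0, Equiv.Perm.inv_apply_self]
      · simp only [Equiv.Perm.mul_apply, hg₁1, hgy, ← hg₀y, Equiv.Perm.inv_apply_self]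
        rw [← hg₁1, Equiv.Perm.inv_apply_self]
    · intro h hh
      simp only [Finset.mem_filter, Finset.mem_univ, true_and] at hh ⊢
      obtain ⟨hhG, hh0, hh1⟩ := hh
      refine ⟨mul_mem (mul_mem (mul_mem hg₀G hg₁G) hhG) (inv_mem hg₁G), ?_, ?_⟩
      · simp only [Equiv.Perm.mul_apply]
        rw [← hg₁0, Equiv.Perm.inv_apply_self, hh0, hg₁0, hg₀x]
      · simp only [Equiv.Perm.mul_apply]
        rw [← hg₁1, Equiv.Perm.inv_apply_self, hh1, hg₁1, hg₀y]
    · intro g _; group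
    · intro h _; group
  -- Lemma A: for g ∈ G, the number of pairs in D × D with g-difference v equals N v.
  have hA : ∀ g : Equiv.Perm (ZMod n), g ∈ G → ∀ v : ZMod n,
      ((D ×ˢ D).filter (fun p => g p.1 - g p.2 = v)).card = N v := by
    intro g hg v
    obtain ⟨t, ht⟩ := hDtranslate g hg
    have hmem : ∀ d ∈ D, g d - t ∈ D := by
      intro d hd
      have h1 : g d ∈ D.image (fun d => d + t) := ht ▸ Finset.mem_image_of_mem g hd
      obtain ⟨d', hd', hdt⟩ := Finset.mem_image.mp h1
      rw [← hdt]; simpa using hd'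
    have hmem' : ∀ e ∈ D, g⁻¹ (e + t) ∈ D := by
      intro e he
      have h1 : e + t ∈ D.image g := by
        rw [ht]; exact Finset.mem_image_of_mem _ he
      obtain ⟨x, hx, hgx⟩ := Finset.mem_image.mp h1
      rw [← hgx, Equiv.Perm.inv_apply_self]; exact hx
    rw [hNdef]
    refine Finset.card_bij' (fun p _ => (g p.1 - t, g p.2 - t))
      (fun q _ => (g⁻¹ (q.1 + t), g⁻¹ (q.2 + t))) ?_ ?_ ?_ ?_
    · intro p hp
      simp only [Finset.mem_filter, Finset.mem_product] at hp ⊢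
      exact ⟨⟨hmem _ hp.1.1, hmem _ hp.1.2⟩, by rw [sub_sub_sub_cancel_right]; exact hp.2⟩
    · intro q hq
      simp only [Finset.mem_filter, Finset.mem_product] at hq ⊢
      refine ⟨⟨hmem' _ hq.1.1, hmem' _ hq.1.2⟩, ?_⟩
      simp only [Equiv.Perm.apply_inv_self]
      rw [add_sub_add_right_eq_sub]; exact hq.2
    · intro p hp
      simp
    · intro q hq
      simp
  -- the diagonal of D × D has k elements
  have hdiag : ((D ×ˢ D).filter (fun p => p.1 - p.2 = (0 : ZMod n))).card = k := by
    rw [← hkcard]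
    refine Finset.card_bij' (fun p _ => p.1) (fun d _ => (d, d)) ?_ ?_ ?_ ?_
    · intro p hp
      simp only [Finset.mem_filter, Finset.mem_product] at hp
      exact hp.1.1
    · intro d hd
      simp only [Finset.mem_filter, Finset.mem_product]
      exact ⟨⟨hd, hd⟩, sub_self d⟩
    · intro p hp
      simp only [Finset.mem_filter, Finset.mem_product] at hp
      have : p.1 = p.2 := sub_eq_zero.mp hp.2
      exact Prod.ext rfl this
    · intro d _; rfl
  -- total count of pairs
  have hNsum : ∑ v : ZMod n, N v = k * k := by
    rw [hNdef, ← Finset.card_eq_sum_card_fiberwise (fun p _ => Finset.mem_univ (p.1 - p.2))]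
    rw [Finset.card_product, hkcard]
  -- sum over nonzero differences
  have hNsum' : ∑ v ∈ Finset.univ.erase (0 : ZMod n), N v = k * (k - 1) := by
    have h1 : N 0 + ∑ v ∈ Finset.univ.erase (0 : ZMod n), N v = k * k := by
      rw [Finset.add_sum_erase _ _ (Finset.mem_univ 0)] at *
      exact hNsum
    have h2 : N 0 = k := hdiag
    have h3 : k * (k - 1) = k * k - k := by
      obtain ⟨m, rfl⟩ := Nat.exists_eq_add_of_le hk
      have : (1 + m) * (1 + m) = (1 + m) * ((1 + m) - 1) + (1 + m) := by
        rw [Nat.add_sub_cancel_left]; ring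
      omega
    omega
  -- number of off-diagonal pairs
  have hoffdiag : ((D ×ˢ D).filter (fun p => p.1 ≠ p.2)).card = k * (k - 1) := by
    have h1 : ((D ×ˢ D).filter (fun p => p.1 = p.2)).card
        + ((D ×ˢ D).filter (fun p => ¬ p.1 = p.2)).card = (D ×ˢ D).card :=
      Finset.card_filter_add_card_filter_not _
    have h2 : ((D ×ˢ D).filter (fun p => p.1 = p.2)) =
        ((D ×ˢ D).filter (fun p => p.1 - p.2 = (0 : ZMod n))) := by
      apply Finset.filter_congr
      intro p _
      simp [sub_eq_zero]
    rw [h2, hdiag, Finset.card_product, hkcard] at h1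
    have h3 : k * (k - 1) = k * k - k := by
      obtain ⟨m, rfl⟩ := Nat.exists_eq_add_of_le hk
      have : (1 + m) * (1 + m) = (1 + m) * ((1 + m) - 1) + (1 + m) := by
        rw [Nat.add_sub_cancel_left]; ring
      omega
    have h4 : ((D ×ˢ D).filter (fun p => p.1 ≠ p.2)).card
        = ((D ×ˢ D).filter (fun p => ¬ p.1 = p.2)).card := rfl
    omega
  -- inner count: for x ≠ y and v ≠ 0, the number of g ∈ G with g x - g y = v is n * c
  have hinner : ∀ x y v : ZMod n, x ≠ y → v ≠ 0 →
      (GG.filter (fun g => g x - g y = v)).card = n * c := by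
    intro x y v hxy hv
    rw [Finset.card_eq_sum_card_fiberwise
      (f := fun g : Equiv.Perm (ZMod n) => g x)
      (t := Finset.univ) (fun g _ => Finset.mem_univ _)]
    have heach : ∀ a : ZMod n,
        ((GG.filter (fun g => g x - g y = v)).filter (fun g => g x = a)).card = c := by
      intro a
      have heq : ((GG.filter (fun g => g x - g y = v)).filter (fun g => g x = a))
          = Finset.univ.filter
              (fun g : Equiv.Perm (ZMod n) => g ∈ G ∧ g x = a ∧ g y = a - v) := by
        ext g
        simp only [Finset.mem_filter, hGGdef, Finset.mem_univ, true_and]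
        constructor
        · rintro ⟨⟨hgG, hgv⟩, hga⟩
          refine ⟨hgG, hga, ?_⟩
          rw [← hga, ← hgv]; exact (sub_sub_cancel _ _).symm
        · rintro ⟨hgG, hga, hgb⟩
          exact ⟨⟨hgG, by rw [hga, hgb, sub_sub_cancel]⟩, hga⟩
      rw [heq]
      exact hB x y a (a - v) hxy (fun h => hv (sub_eq_self.mp h.symm))
    calc ∑ a : ZMod n,
          ((GG.filter (fun g => g x - g y = v)).filter (fun g => g x = a)).card
        = ∑ _a : ZMod n, c := Finset.sum_congr rfl (fun a _ => heach a)
      _ = n * c := by rw [Finset.sum_const, Finset.card_univ, ZMod.card, smul_eq_mul]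
  -- the main double counting identity, for each v ≠ 0
  have hmain : ∀ v : ZMod n, v ≠ 0 → GG.card * N v = (k * (k - 1)) * (n * c) := by
    intro v hv
    have hway1 : ∑ g ∈ GG, ((D ×ˢ D).filter (fun p => g p.1 - g p.2 = v)).card
        = GG.card * N v := by
      rw [Finset.sum_congr rfl (fun g hg => hA g (by
        rw [hGGdef] at hg; exact (Finset.mem_filter.mp hg).2) v)]
      rw [Finset.sum_const, smul_eq_mul]
    have hway2 : ∑ g ∈ GG, ((D ×ˢ D).filter (fun p => g p.1 - g p.2 = v)).card
        = (k * (k - 1)) * (n * c) := by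
      have hswap : ∑ g ∈ GG, ((D ×ˢ D).filter (fun p => g p.1 - g p.2 = v)).card
          = ∑ p ∈ D ×ˢ D, (GG.filter (fun g => g p.1 - g p.2 = v)).card := by
        simp only [Finset.card_filter]
        exact Finset.sum_comm
      rw [hswap]
      have hzero : ∀ p ∈ D ×ˢ D, p.1 = p.2 →
          (GG.filter (fun g => g p.1 - g p.2 = v)).card = 0 := by
        intro p _ hp
        rw [Finset.card_eq_zero, Finset.filter_eq_empty_iff]
        intro g _
        rw [hp, sub_self]
        exact fun h => hv h.symm
      have hsplit : ∑ p ∈ D ×ˢ D, (GG.filter (fun g => g p.1 - g p.2 = v)).card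
          = ∑ p ∈ (D ×ˢ D).filter (fun p => p.1 ≠ p.2),
              (GG.filter (fun g => g p.1 - g p.2 = v)).card := by
        refine (Finset.sum_filter_of_ne ?_).symm
        intro p hp hne
        by_contra hcon
        exact hne (hzero p hp hcon)
      rw [hsplit]
      have hcong : ∑ p ∈ (D ×ˢ D).filter (fun p => p.1 ≠ p.2),
            (GG.filter (fun g => g p.1 - g p.2 = v)).card
          = ∑ _p ∈ (D ×ˢ D).filter (fun p => p.1 ≠ p.2), n * c :=
        Finset.sum_congr rfl (fun p hp => hinner p.1 p.2 v (Finset.mem_filter.mp hp).2 hv)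
      rw [hcong, Finset.sum_const, smul_eq_mul, hoffdiag]
    rw [← hway1, hway2]
  -- GG is nonempty
  have hGGpos : 0 < GG.card := by
    rw [Finset.card_pos]
    exact ⟨1, by rw [hGGdef]; simp [Subgroup.one_mem]⟩
  -- N is constant on nonzero elements
  have hconst : ∀ v w : ZMod n, v ≠ 0 → w ≠ 0 → N v = N w := by
    intro v w hv hw
    have := (hmain v hv).trans (hmain w hw).symm
    exact Nat.eq_of_mul_eq_mul_left hGGpos this
  -- conclude
  have hone : (1 : ZMod n) ≠ 0 := one_ne_zero
  have hkey : (n - 1) * N 1 = k * (k - 1) := by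
    have hcard : (Finset.univ.erase (0 : ZMod n)).card = n - 1 := by
      rw [Finset.card_erase_of_mem (Finset.mem_univ _), Finset.card_univ, ZMod.card]
    calc (n - 1) * N 1 = ∑ v ∈ Finset.univ.erase (0 : ZMod n), N 1 := by
          rw [Finset.sum_const, smul_eq_mul, hcard]
      _ = ∑ v ∈ Finset.univ.erase (0 : ZMod n), N v :=
          Finset.sum_congr rfl (fun v hv => hconst 1 v hone (Finset.mem_erase.mp hv).1)
      _ = k * (k - 1) := hNsum'
  constructor
  · exact ⟨N 1, hkey.symm⟩
  · intro u hu
    have h1 : N u = N 1 := hconst u 1 hu hone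
    have h2 : k * (k - 1) / (n - 1) = N 1 :=
      Nat.div_eq_of_eq_mul_left (by omega) (by rw [← hkey]; ring)
    show N u = k * (k - 1) / (n - 1)
    rw [h1, h2]
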